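/- arXiv:2506.05913 — 2 statements merged into one kernel-verified Lean document; each statement's English description precedes it below -/
import Mathlib

section
/- For q ≥ 1, the MED_q criterion Φ(M) = (∫_C (g(z)^T M^{-1} g(z))^q dμ(z))^{1/q} is convex on the set of positive definite symmetric m×m matrices, i.e., for positive definite M₁, M₂ and α ∈ [0,1], Φ(αM₁+(1-α)M₂) ≤ αΦ(M₁) + (1-α)Φ(M₂). -/
open MeasureTheory Matrix Set
open scoped ENNReal NNReal

lemma aux_key {m : ℕ} {M : Matrix (Fin m) (Fin m) ℝ} (hM : M.PosDef)
    (x y : Fin m → ℝ) :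
    2 * (x ⬝ᵥ y) - y ⬝ᵥ (M *ᵥ y) ≤ x ⬝ᵥ (M⁻¹ *ᵥ x) := by
  have ht : Mᵀ = M := hM.isHermitian
  set u : Fin m → ℝ := M⁻¹ *ᵥ x with hu
  have hMu : M *ᵥ u = x := by
    rw [hu, mulVec_mulVec, Matrix.mul_nonsing_inv _ hM.det_pos.ne'.isUnit, one_mulVec]
  have h0 : 0 ≤ (u - y) ⬝ᵥ (M *ᵥ (u - y)) := by
    simpa using hM.posSemidef.dotProduct_mulVec_nonneg (u - y)
  have hsym : ∀ w : Fin m → ℝ, u ⬝ᵥ (M *ᵥ w) = x ⬝ᵥ w := by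
    intro w
    rw [dotProduct_mulVec, ← Matrix.mulVec_transpose, ht, hMu]
  have hexp : (u - y) ⬝ᵥ (M *ᵥ (u - y))
      = x ⬝ᵥ u - 2 * (x ⬝ᵥ y) + y ⬝ᵥ (M *ᵥ y) := by
    rw [mulVec_sub, dotProduct_sub, sub_dotProduct, sub_dotProduct,
      hsym u, hsym y]
    have h1 : y ⬝ᵥ (M *ᵥ u) = x ⬝ᵥ y := by
      rw [hMu, dotProduct_comm]
    have h2 : u ⬝ᵥ x = x ⬝ᵥ u := dotProduct_comm _ _
    rw [h1]; ring
  linarith [h0, hexp]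

lemma aux_qf {m : ℕ} (M₁ M₂ : Matrix (Fin m) (Fin m) ℝ) (α : ℝ) (w : Fin m → ℝ) :
    w ⬝ᵥ ((α • M₁ + (1 - α) • M₂) *ᵥ w)
      = α * (w ⬝ᵥ (M₁ *ᵥ w)) + (1 - α) * (w ⬝ᵥ (M₂ *ᵥ w)) := by
  rw [add_mulVec, smul_mulVec, smul_mulVec, dotProduct_add,
    dotProduct_smul, dotProduct_smul]
  simp [smul_eq_mul]

lemma aux_posdef {m : ℕ} {M₁ M₂ : Matrix (Fin m) (Fin m) ℝ}
    (h₁ : M₁.PosDef) (h₂ : M₂.PosDef) {α : ℝ} (hα0 : 0 ≤ α) (hα1 : α ≤ 1) :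
    (α • M₁ + (1 - α) • M₂).PosDef := by
  rw [posDef_iff_dotProduct_mulVec]
  constructor
  · have e1 : M₁ᵀ = M₁ := h₁.isHermitian
    have e2 : M₂ᵀ = M₂ := h₂.isHermitian
    show (α • M₁ + (1 - α) • M₂)ᴴ = _
    show (α • M₁ + (1 - α) • M₂)ᵀ = _
    rw [transpose_add, transpose_smul, transpose_smul, e1, e2]
  · intro x hx
    have q1 := h₁.dotProduct_mulVec_pos hx
    have q2 := h₂.dotProduct_mulVec_pos hx
    simp only [star_trivial] at q1 q2 ⊢
    rw [aux_qf]
    rcases hα0.lt_or_eq with h | h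
    · have : 0 ≤ (1 - α) * (x ⬝ᵥ (M₂ *ᵥ x)) :=
        mul_nonneg (by linarith) q2.le
      nlinarith
    · rw [← h]; simpa using q2

lemma aux_pointwise {m : ℕ} {M₁ M₂ : Matrix (Fin m) (Fin m) ℝ}
    (h₁ : M₁.PosDef) (h₂ : M₂.PosDef) {α : ℝ} (hα0 : 0 ≤ α) (hα1 : α ≤ 1)
    (x : Fin m → ℝ) :
    x ⬝ᵥ ((α • M₁ + (1 - α) • M₂)⁻¹ *ᵥ x)
      ≤ α * (x ⬝ᵥ (M₁⁻¹ *ᵥ x)) + (1 - α) * (x ⬝ᵥ (M₂⁻¹ *ᵥ x)) := by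
  have hα : (α • M₁ + (1 - α) • M₂).PosDef := aux_posdef h₁ h₂ hα0 hα1
  set Mα := α • M₁ + (1 - α) • M₂ with hMα
  set y : Fin m → ℝ := Mα⁻¹ *ᵥ x with hy
  have hMy : Mα *ᵥ y = x := by
    rw [hy, mulVec_mulVec, Matrix.mul_nonsing_inv _ hα.det_pos.ne'.isUnit, one_mulVec]
  have heq : x ⬝ᵥ (Mα⁻¹ *ᵥ x) = 2 * (x ⬝ᵥ y) - y ⬝ᵥ (Mα *ᵥ y) := by
    rw [hMy]
    rw [show y ⬝ᵥ x = x ⬝ᵥ y from dotProduct_comm _ _, ← hy]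
    ring
  have hexp : y ⬝ᵥ (Mα *ᵥ y) = α * (y ⬝ᵥ (M₁ *ᵥ y)) + (1 - α) * (y ⬝ᵥ (M₂ *ᵥ y)) :=
    aux_qf M₁ M₂ α y
  have k1 := aux_key h₁ x y
  have k2 := aux_key h₂ x y
  have b1 : α * (2 * (x ⬝ᵥ y) - y ⬝ᵥ (M₁ *ᵥ y)) ≤ α * (x ⬝ᵥ (M₁⁻¹ *ᵥ x)) :=
    mul_le_mul_of_nonneg_left k1 hα0
  have b2 : (1 - α) * (2 * (x ⬝ᵥ y) - y ⬝ᵥ (M₂ *ᵥ y)) ≤ (1 - α) * (x ⬝ᵥ (M₂⁻¹ *ᵥ x)) :=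
    mul_le_mul_of_nonneg_left k2 (by linarith)
  rw [heq, hexp]
  linarith [b1, b2]

lemma aux_dot_ge {m : ℕ} (x : Fin m → ℝ) : ‖x‖ ^ 2 ≤ x ⬝ᵥ x := by
  have hS : (0:ℝ) ≤ ∑ j, x j ^ 2 := Finset.sum_nonneg fun j _ => sq_nonneg _
  have hx : ‖x‖ ≤ Real.sqrt (∑ j, x j ^ 2) := by
    rw [pi_norm_le_iff_of_nonneg (Real.sqrt_nonneg _)]
    intro i
    rw [Real.norm_eq_abs, ← Real.sqrt_sq_eq_abs]
    exact Real.sqrt_le_sqrt (Finset.single_le_sum (fun j _ => sq_nonneg (x j)) (Finset.mem_univ i))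
  calc ‖x‖ ^ 2 ≤ Real.sqrt (∑ j, x j ^ 2) ^ 2 := by
        exact pow_le_pow_left₀ (norm_nonneg _) hx 2
    _ = ∑ j, x j ^ 2 := Real.sq_sqrt hS
    _ = x ⬝ᵥ x := by simp [dotProduct, sq]

lemma aux_ub {m : ℕ} (N : Matrix (Fin m) (Fin m) ℝ) (x : Fin m → ℝ) :
    x ⬝ᵥ (N *ᵥ x) ≤ (∑ i, ∑ j, |N i j|) * ‖x‖ ^ 2 := by
  have hxi : ∀ i, |x i| ≤ ‖x‖ := fun i => by
    simpa [Real.norm_eq_abs] using norm_le_pi_norm x i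
  calc x ⬝ᵥ (N *ᵥ x) = ∑ i, ∑ j, x i * (N i j * x j) := by
        simp [dotProduct, mulVec, Finset.mul_sum]
    _ ≤ ∑ i, ∑ j, |N i j| * ‖x‖ ^ 2 := by
        apply Finset.sum_le_sum; intro i _
        apply Finset.sum_le_sum; intro j _
        calc x i * (N i j * x j) ≤ |x i * (N i j * x j)| := le_abs_self _
          _ = |N i j| * (|x i| * |x j|) := by rw [abs_mul, abs_mul]; ring
          _ ≤ |N i j| * (‖x‖ * ‖x‖) := by
              apply mul_le_mul_of_nonneg_left _ (abs_nonneg _)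
              exact mul_le_mul (hxi i) (hxi j) (abs_nonneg _) (norm_nonneg _)
          _ = |N i j| * ‖x‖ ^ 2 := by ring
    _ = (∑ i, ∑ j, |N i j|) * ‖x‖ ^ 2 := by rw [Finset.sum_mul]; congr 1; ext i; rw [Finset.sum_mul]

lemma aux_lb {m : ℕ} {M : Matrix (Fin m) (Fin m) ℝ} (hM : M.PosDef) (x : Fin m → ℝ) :
    (1 / ((∑ i, ∑ j, |M i j|) + 1)) * ‖x‖ ^ 2 ≤ x ⬝ᵥ (M⁻¹ *ᵥ x) := by
  set K : ℝ := (∑ i, ∑ j, |M i j|) + 1 with hKdef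
  have hK1 : 1 ≤ K := by
    have : (0:ℝ) ≤ ∑ i, ∑ j, |M i j| :=
      Finset.sum_nonneg fun i _ => Finset.sum_nonneg fun j _ => abs_nonneg _
    linarith
  have hK0 : 0 < K := by linarith
  have key := aux_key hM x ((1 / K) • x)
  have e1 : x ⬝ᵥ ((1 / K) • x) = (1 / K) * (x ⬝ᵥ x) := by
    rw [dotProduct_smul]; rfl
  have e2 : ((1 / K) • x) ⬝ᵥ (M *ᵥ ((1 / K) • x))
      = (1 / K) ^ 2 * (x ⬝ᵥ (M *ᵥ x)) := by
    rw [mulVec_smul, dotProduct_smul, smul_dotProduct]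
    simp only [smul_eq_mul]; ring
  rw [e1, e2] at key
  have hub : x ⬝ᵥ (M *ᵥ x) ≤ (K - 1) * ‖x‖ ^ 2 := by
    simpa [hKdef] using aux_ub M x
  have hdot : ‖x‖ ^ 2 ≤ x ⬝ᵥ x := aux_dot_ge x
  have hxx : (0:ℝ) ≤ ‖x‖ ^ 2 := sq_nonneg _
  have h2 : (K - 1) * ‖x‖ ^ 2 ≤ (K - 1) * (x ⬝ᵥ x) :=
    mul_le_mul_of_nonneg_left hdot (by linarith)
  have hK2 : (0:ℝ) < K ^ 2 := by positivity
  -- 2/K * S - (1/K)^2 * (K-1) * S ≥ (1/K) * S  where S = x ⬝ᵥ x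
  have hS0 : (0:ℝ) ≤ x ⬝ᵥ x := le_trans hxx hdot
  have final : (1 / K) * (x ⬝ᵥ x) ≤ 2 * ((1 / K) * (x ⬝ᵥ x)) - (1 / K) ^ 2 * (x ⬝ᵥ (M *ᵥ x)) := by
    have h3 : (1 / K) ^ 2 * (x ⬝ᵥ (M *ᵥ x)) ≤ (1 / K) ^ 2 * ((K - 1) * (x ⬝ᵥ x)) :=
      mul_le_mul_of_nonneg_left (le_trans hub h2) (by positivity)
    have hc : (1 / K) ^ 2 * (K - 1) ≤ 1 / K := by
      rw [div_pow, one_pow, div_mul_eq_mul_div, div_le_div_iff₀ hK2 hK0]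
      nlinarith
    have h4 : (1 / K) ^ 2 * ((K - 1) * (x ⬝ᵥ x)) ≤ (1 / K) * (x ⬝ᵥ x) := by
      calc (1 / K) ^ 2 * ((K - 1) * (x ⬝ᵥ x)) = ((1 / K) ^ 2 * (K - 1)) * (x ⬝ᵥ x) := by ring
        _ ≤ (1 / K) * (x ⬝ᵥ x) := mul_le_mul_of_nonneg_right hc hS0
    linarith
  calc (1 / K) * ‖x‖ ^ 2 ≤ (1 / K) * (x ⬝ᵥ x) :=
        mul_le_mul_of_nonneg_left hdot (by positivity)
    _ ≤ 2 * ((1 / K) * (x ⬝ᵥ x)) - (1 / K) ^ 2 * (x ⬝ᵥ (M *ᵥ x)) := final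
    _ ≤ x ⬝ᵥ (M⁻¹ *ᵥ x) := by linarith [key]

lemma aux_int_mono {u v : (ℝ × ℝ) → ℝ} {ν : Measure (ℝ × ℝ)}
    (hu : Measurable u) (hv : Integrable v ν) (c : ℝ)
    (hnn : ∀ z, 0 ≤ u z) (hb : ∀ z, u z ≤ c * v z) : Integrable u ν :=
  (hv.const_mul c).mono hu.aestronglyMeasurable
    (ae_of_all _ fun z => by
      rw [Real.norm_eq_abs, Real.norm_eq_abs, abs_of_nonneg (hnn z)]
      exact (hb z).trans (le_abs_self _))

lemma aux_meas {m : ℕ} {g : (ℝ × ℝ) → Fin m → ℝ} (hgm : Measurable g)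
    (N : Matrix (Fin m) (Fin m) ℝ) :
    Measurable (fun z => g z ⬝ᵥ (N *ᵥ g z)) := by
  simp only [dotProduct, mulVec]
  exact Finset.measurable_sum _ fun i _ =>
    ((measurable_pi_apply i).comp hgm).mul
      (Finset.measurable_sum _ fun j _ =>
        (measurable_const.mul ((measurable_pi_apply j).comp hgm)))

/-- For q ≥ 1, the MED_q criterion Φ(M) = (∫_C (g(z)^T M⁻¹ g(z))^q dμ)^{1/q}
is convex on positive definite symmetric matrices. -/
theorem MEDq_criterion_convex {m : ℕ} (C : Set (ℝ × ℝ)) (μ : Measure (ℝ × ℝ))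
    [IsFiniteMeasure μ] (g : (ℝ × ℝ) → Fin m → ℝ) (hgm : Measurable g)
    (B : ℝ) (hgb : ∀ z ∈ C, ‖g z‖ ≤ B)
    (q : ℝ) (hq : 1 ≤ q)
    (Φ : Matrix (Fin m) (Fin m) ℝ → ℝ)
    (hΦ : ∀ M, Φ M = (∫ z in C, (g z ⬝ᵥ (M⁻¹ *ᵥ g z)) ^ q ∂μ) ^ (1 / q))
    (M₁ M₂ : Matrix (Fin m) (Fin m) ℝ) (h₁ : M₁.PosDef) (h₂ : M₂.PosDef)
    (α : ℝ) (hα0 : 0 ≤ α) (hα1 : α ≤ 1) :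
    Φ (α • M₁ + (1 - α) • M₂) ≤ α * Φ M₁ + (1 - α) * Φ M₂ := by
  have hq0 : (0:ℝ) < q := lt_of_lt_of_le one_pos hq
  have hq0' : q ≠ 0 := hq0.ne'
  set ν : Measure (ℝ × ℝ) := μ.restrict C with hν
  set Mα : Matrix (Fin m) (Fin m) ℝ := α • M₁ + (1 - α) • M₂ with hMαdef
  have hα : Mα.PosDef := aux_posdef h₁ h₂ hα0 hα1
  -- the three quadratic-form functions
  set f : Matrix (Fin m) (Fin m) ℝ → (ℝ × ℝ) → ℝ :=
    fun M z => g z ⬝ᵥ (M⁻¹ *ᵥ g z) with hfdef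
  have hfmeas : ∀ M, Measurable (f M) := fun M => aux_meas hgm M⁻¹
  have hfnn : ∀ (M : Matrix (Fin m) (Fin m) ℝ), M.PosDef → ∀ z, 0 ≤ f M z := by
    intro M hM z
    simpa using hM.inv.posSemidef.dotProduct_mulVec_nonneg (g z)
  have hfqmeas : ∀ M, Measurable (fun z => f M z ^ q) :=
    fun M => (hfmeas M).pow_const q |>.mono le_rfl le_rfl
  -- comparison function
  set h : (ℝ × ℝ) → ℝ := fun z => (‖g z‖ ^ 2) ^ q with hhdef
  have hhm : Measurable h := ((hgm.norm.pow_const 2).pow_const q).mono le_rfl le_rfl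
  have hhnn : ∀ z, 0 ≤ h z := fun z => Real.rpow_nonneg (sq_nonneg _) q
  -- integrability transfer: f M ^ q integrable ↔ h integrable
  have hcompat : ∀ (M : Matrix (Fin m) (Fin m) ℝ), M.PosDef →
      (Integrable (fun z => f M z ^ q) ν ↔ Integrable h ν) := by
    intro M hM
    have hq0le : (0:ℝ) ≤ q := hq0.le
    set c : ℝ := 1 / ((∑ i, ∑ j, |M i j|) + 1) with hcdef
    have hc0 : 0 < c := by
      have : (0:ℝ) ≤ ∑ i, ∑ j, |M i j| :=
        Finset.sum_nonneg fun i _ => Finset.sum_nonneg fun j _ => abs_nonneg _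
      positivity
    set K : ℝ := ∑ i, ∑ j, |M⁻¹ i j| with hKdef
    have hK0 : 0 ≤ K :=
      Finset.sum_nonneg fun i _ => Finset.sum_nonneg fun j _ => abs_nonneg _
    constructor
    · intro hint
      refine aux_int_mono hhm hint ((1 / c) ^ q) hhnn fun z => ?_
      have hb : ‖g z‖ ^ 2 ≤ (1 / c) * f M z := by
        have h' := aux_lb hM (g z)
        rw [← hcdef] at h'
        calc ‖g z‖ ^ 2 = (1 / c) * (c * ‖g z‖ ^ 2) := by field_simp
          _ ≤ (1 / c) * f M z := mul_le_mul_of_nonneg_left h' (by positivity)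
      calc h z = (‖g z‖ ^ 2) ^ q := rfl
        _ ≤ ((1 / c) * f M z) ^ q := Real.rpow_le_rpow (sq_nonneg _) hb hq0le
        _ = (1 / c) ^ q * f M z ^ q :=
            Real.mul_rpow (by positivity) (hfnn M hM z)
    · intro hint
      refine aux_int_mono (hfqmeas M) hint (K ^ q) (fun z => Real.rpow_nonneg (hfnn M hM z) q)
        fun z => ?_
      have hb : f M z ≤ K * ‖g z‖ ^ 2 := by
        have := aux_ub M⁻¹ (g z)
        rwa [← hKdef] at this
      calc f M z ^ q ≤ (K * ‖g z‖ ^ 2) ^ q :=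
            Real.rpow_le_rpow (hfnn M hM z) hb hq0le
        _ = K ^ q * h z := Real.mul_rpow hK0 (sq_nonneg _)
  have hΦ' : ∀ M, Φ M = (∫ z, f M z ^ q ∂ν) ^ (1 / q) := hΦ
  by_cases hI : Integrable h ν
  · have hint : ∀ (M : Matrix (Fin m) (Fin m) ℝ), M.PosDef →
        Integrable (fun z => f M z ^ q) ν :=
      fun M hM => (hcompat M hM).2 hI
    set F : Matrix (Fin m) (Fin m) ℝ → (ℝ × ℝ) → ℝ≥0∞ :=
      fun M z => ENNReal.ofReal (f M z) with hFdef
    have hFmeas : ∀ M, Measurable (F M) := fun M => (hfmeas M).ennreal_ofReal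
    set L : Matrix (Fin m) (Fin m) ℝ → ℝ≥0∞ :=
      fun M => ∫⁻ z, (F M z) ^ q ∂ν with hLdef
    have hIL : ∀ (M : Matrix (Fin m) (Fin m) ℝ), M.PosDef →
        ENNReal.ofReal (∫ z, f M z ^ q ∂ν) = L M := by
      intro M hM
      rw [MeasureTheory.ofReal_integral_eq_lintegral_ofReal (hint M hM)
        (ae_of_all _ fun z => Real.rpow_nonneg (hfnn M hM z) q)]
      refine lintegral_congr fun z => ?_
      rw [ENNReal.ofReal_rpow_of_nonneg (hfnn M hM z) hq0.le]
    have hInn : ∀ (M : Matrix (Fin m) (Fin m) ℝ), M.PosDef →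
        0 ≤ ∫ z, f M z ^ q ∂ν := fun M hM =>
      integral_nonneg fun z => Real.rpow_nonneg (hfnn M hM z) q
    have hΦofReal : ∀ (M : Matrix (Fin m) (Fin m) ℝ) (hM : M.PosDef),
        ENNReal.ofReal (Φ M) = (L M) ^ (1 / q) := by
      intro M hM
      rw [hΦ', ← ENNReal.ofReal_rpow_of_nonneg (hInn M hM) (by positivity : (0:ℝ) ≤ 1 / q), hIL M hM]
    have hΦnn : ∀ (M : Matrix (Fin m) (Fin m) ℝ), M.PosDef → 0 ≤ Φ M := by
      intro M hM
      rw [hΦ']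
      exact Real.rpow_nonneg (hInn M hM) _
    set a : ℝ≥0∞ := ENNReal.ofReal α with hadef
    set b : ℝ≥0∞ := ENNReal.ofReal (1 - α) with hbdef
    have hpt : ∀ z, F Mα z ≤ a * F M₁ z + b * F M₂ z := by
      intro z
      calc F Mα z ≤ ENNReal.ofReal (α * f M₁ z + (1 - α) * f M₂ z) :=
            ENNReal.ofReal_le_ofReal (aux_pointwise h₁ h₂ hα0 hα1 (g z))
        _ = a * F M₁ z + b * F M₂ z := by
            rw [ENNReal.ofReal_add (mul_nonneg hα0 (hfnn _ h₁ z))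
              (mul_nonneg (by linarith) (hfnn _ h₂ z)),
              ENNReal.ofReal_mul hα0, ENNReal.ofReal_mul (by linarith : (0:ℝ) ≤ 1 - α)]
    have step1 : (L Mα) ^ (1 / q)
        ≤ (∫⁻ z, (a * F M₁ z + b * F M₂ z) ^ q ∂ν) ^ (1 / q) := by
      refine ENNReal.rpow_le_rpow (lintegral_mono fun z => ?_) (by positivity)
      exact ENNReal.rpow_le_rpow (hpt z) hq0.le
    have step2 : (∫⁻ z, (a * F M₁ z + b * F M₂ z) ^ q ∂ν) ^ (1 / q)
        ≤ (∫⁻ z, (a * F M₁ z) ^ q ∂ν) ^ (1 / q) + (∫⁻ z, (b * F M₂ z) ^ q ∂ν) ^ (1 / q) :=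
      ENNReal.lintegral_Lp_add_le ((measurable_const.mul (hFmeas M₁)).aemeasurable)
        ((measurable_const.mul (hFmeas M₂)).aemeasurable) hq
    have hconst : ∀ (c : ℝ≥0∞) (M : Matrix (Fin m) (Fin m) ℝ),
        (∫⁻ z, (c * F M z) ^ q ∂ν) ^ (1 / q) = c * (L M) ^ (1 / q) := by
      intro c M
      have he : ∀ z, (c * F M z) ^ q = c ^ q * (F M z) ^ q := fun z =>
        ENNReal.mul_rpow_of_nonneg _ _ hq0.le
      rw [lintegral_congr he, lintegral_const_mul _ ((hFmeas M).pow_const q),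
        ENNReal.mul_rpow_of_nonneg _ _ (by positivity : (0:ℝ) ≤ 1 / q),
        ← ENNReal.rpow_mul, mul_one_div, div_self hq0', ENNReal.rpow_one]
    have main : ENNReal.ofReal (Φ Mα) ≤ ENNReal.ofReal (α * Φ M₁ + (1 - α) * Φ M₂) := by
      rw [hΦofReal Mα hα,
        ENNReal.ofReal_add (mul_nonneg hα0 (hΦnn M₁ h₁))
          (mul_nonneg (by linarith) (hΦnn M₂ h₂)),
        ENNReal.ofReal_mul hα0, ENNReal.ofReal_mul (by linarith : (0:ℝ) ≤ 1 - α),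
        hΦofReal M₁ h₁, hΦofReal M₂ h₂]
      calc (L Mα) ^ (1 / q) ≤ _ := step1
        _ ≤ _ := step2
        _ = a * (L M₁) ^ (1 / q) + b * (L M₂) ^ (1 / q) := by
            rw [hconst a M₁, hconst b M₂]
    have hrhs : 0 ≤ α * Φ M₁ + (1 - α) * Φ M₂ := by
      have n1 := hΦnn M₁ h₁
      have n2 := hΦnn M₂ h₂
      nlinarith
    exact (ENNReal.ofReal_le_ofReal_iff hrhs).mp main
  · -- non-integrable case: all Φ's are zero
    have hzero : ∀ (M : Matrix (Fin m) (Fin m) ℝ), M.PosDef → Φ M = 0 := by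
      intro M hM
      rw [hΦ, integral_undef (fun hint => hI ((hcompat M hM).1 hint)),
        Real.zero_rpow (by positivity)]
    rw [hzero _ hα, hzero _ h₁, hzero _ h₂]
    simp
end

section
/- A bound on the equivalence-theorem functional via Cauchy–Schwarz: for any design ξ with nonsingular information matrix and any z₀ ∈ Z, ∫_C φ(z)^{q-1} α(z₀,z)² dμ(z) ≤ φ(z₀) ∫_C φ(z)^q dμ(z) = φ(z₀) · φ_{MED_q}(ξ)^q, where φ(z) = g(z)^T M(ξ)^{-1} g(z) and α(z₀,z) = g(z)^T M(ξ)^{-1} g(z₀). Hence if φ(z₀) ≤ 1 for all z₀ ∈ Z, the equivalence-theorem inequality holds at all z₀. -/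
open MeasureTheory Matrix Set

lemma psd_cauchy_schwarz' {m : ℕ} {A : Matrix (Fin m) (Fin m) ℝ} (hA : A.PosSemidef)
    (x y : Fin m → ℝ) :
    (x ⬝ᵥ A *ᵥ y) ^ 2 ≤ (x ⬝ᵥ A *ᵥ x) * (y ⬝ᵥ A *ᵥ y) := by
  obtain ⟨B, rfl⟩ : ∃ B : Matrix (Fin m) (Fin m) ℝ, A = Bᴴ * B := by
    open scoped MatrixOrder Matrix.Norms.L2Operator in
    exact CStarAlgebra.nonneg_iff_eq_star_mul_self.mp hA.nonneg
  have key : ∀ u v : Fin m → ℝ, u ⬝ᵥ (Bᴴ * B) *ᵥ v = (B *ᵥ u) ⬝ᵥ (B *ᵥ v) := by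
    intro u v
    rw [← Matrix.mulVec_mulVec, Matrix.dotProduct_mulVec,
      Matrix.conjTranspose_eq_transpose_of_trivial, Matrix.vecMul_transpose]
  rw [key, key, key]
  simpa [dotProduct, pow_two] using
    Finset.sum_mul_sq_le_sq_mul_sq Finset.univ (B *ᵥ x) (B *ᵥ y)

/-- Cauchy–Schwarz bound on the equivalence-theorem functional:
∫_C φ^{q-1} α(z₀,·)² dμ ≤ φ(z₀) ∫_C φ^q dμ; hence if φ ≤ 1 on Z the
equivalence inequality holds at all z₀ ∈ Z. -/
theorem equivalence_functional_cauchy_schwarz_bound {m : ℕ} (Z C : Set (ℝ × ℝ))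
    (hZ : IsCompact Z) (hC : C ⊆ Z)
    (g : (ℝ × ℝ) → Fin m → ℝ) (hg : ContinuousOn g Z)
    (μ : Measure (ℝ × ℝ)) [IsProbabilityMeasure μ] (hμ : μ Cᶜ = 0)
    (q : ℝ) (hq : 1 ≤ q)
    (ξ : Measure (ℝ × ℝ)) [IsProbabilityMeasure ξ] (hξZ : ξ Zᶜ = 0)
    (M : Matrix (Fin m) (Fin m) ℝ)
    (hM : M = Matrix.of fun i j => ∫ z in Z, g z i * g z j ∂ξ)
    (hMpd : M.PosDef)
    (φ : (ℝ × ℝ) → ℝ) (hφ : ∀ z, φ z = g z ⬝ᵥ (M⁻¹ *ᵥ g z))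
    (α : (ℝ × ℝ) → (ℝ × ℝ) → ℝ) (hα : ∀ z₀ z, α z₀ z = g z ⬝ᵥ (M⁻¹ *ᵥ g z₀)) :
    (∀ z₀ ∈ Z, ∫ z in C, (φ z) ^ (q - 1) * (α z₀ z) ^ 2 ∂μ
        ≤ φ z₀ * ∫ z in C, (φ z) ^ q ∂μ) ∧
    ((∀ z₀ ∈ Z, φ z₀ ≤ 1) → ∀ z₀ ∈ Z,
        ∫ z in C, (φ z) ^ (q - 1) * (α z₀ z) ^ 2 ∂μ ≤ ∫ z in C, (φ z) ^ q ∂μ) := by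
  classical
  have hMinv : (M⁻¹).PosDef := hMpd.inv
  have hMinvSd : (M⁻¹).PosSemidef := hMinv.posSemidef
  -- nonnegativity of φ
  have hφnn : ∀ z, 0 ≤ φ z := by
    intro z
    rw [hφ]
    simpa using hMinvSd.re_dotProduct_nonneg (g z)
  -- Cauchy–Schwarz pointwise
  have hCS : ∀ z₀ z, (α z₀ z) ^ 2 ≤ φ z * φ z₀ := by
    intro z₀ z
    rw [hα, hφ, hφ]
    exact psd_cauchy_schwarz' hMinvSd (g z) (g z₀)
  have hq0 : (0:ℝ) < q := lt_of_lt_of_le one_pos hq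
  -- pointwise key inequality
  have hkey : ∀ z₀ z, (φ z) ^ (q - 1) * (α z₀ z) ^ 2 ≤ φ z₀ * (φ z) ^ q := by
    intro z₀ z
    rcases eq_or_lt_of_le (hφnn z) with h0 | hpos
    · have hα0 : (α z₀ z) ^ 2 ≤ 0 := by
        have := hCS z₀ z; rw [← h0] at this; simpa using this
      have hα0' : (α z₀ z) ^ 2 = 0 := le_antisymm hα0 (sq_nonneg _)
      rw [hα0', mul_zero, ← h0, Real.zero_rpow (ne_of_gt hq0)]
      simp
    · calc (φ z) ^ (q - 1) * (α z₀ z) ^ 2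
          ≤ (φ z) ^ (q - 1) * (φ z * φ z₀) := by
            apply mul_le_mul_of_nonneg_left (hCS z₀ z)
            exact Real.rpow_nonneg (le_of_lt hpos) _
      _ = φ z₀ * ((φ z) ^ (q - 1) * φ z) := by ring
      _ = φ z₀ * (φ z) ^ q := by
            rw [← Real.rpow_add_one (ne_of_gt hpos) (q - 1)]
            ring_nf
  -- measure identities
  have hμZ : μ Zᶜ = 0 :=
    le_antisymm (le_trans (measure_mono (compl_subset_compl.mpr hC)) (le_of_eq hμ)) (zero_le)
  have hCres : μ.restrict C = μ :=
    Measure.restrict_eq_self_of_ae_mem (ae_iff.mpr hμ)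
  have hZres : μ.restrict Z = μ :=
    Measure.restrict_eq_self_of_ae_mem (ae_iff.mpr hμZ)
  have haeZ : ∀ᵐ z ∂μ, z ∈ Z := ae_iff.mpr hμZ
  -- continuity of φ on Z
  have hgc : ∀ i, ContinuousOn (fun z => g z i) Z := fun i =>
    (continuous_apply i).comp_continuousOn hg
  have hφc : ContinuousOn φ Z := by
    have : ContinuousOn (fun z => g z ⬝ᵥ (M⁻¹ *ᵥ g z)) Z := by
      simp only [dotProduct, Matrix.mulVec, dotProduct]
      apply continuousOn_finset_sum
      intro i _
      exact (hgc i).mul (continuousOn_finset_sum _ fun j _ =>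
        (continuousOn_const.mul (hgc j)))
    have heq : φ = fun z => g z ⬝ᵥ (M⁻¹ *ᵥ g z) := funext hφ
    rw [heq]; exact this
  -- integrability of φ^q on Z (hence w.r.t. μ)
  have hφqc : ContinuousOn (fun z => (φ z) ^ q) Z := by
    intro z hz
    exact (Real.continuousAt_rpow_const (φ z) q (Or.inr hq0.le)).comp_continuousWithinAt
      (hφc z hz)
  have hint : Integrable (fun z => (φ z) ^ q) μ := by
    have : IntegrableOn (fun z => (φ z) ^ q) Z μ := hφqc.integrableOn_compact hZ
    rwa [IntegrableOn, hZres] at this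
  have main : ∀ z₀ ∈ Z, ∫ z in C, (φ z) ^ (q - 1) * (α z₀ z) ^ 2 ∂μ
      ≤ φ z₀ * ∫ z in C, (φ z) ^ q ∂μ := by
    intro z₀ hz₀
    rw [hCres, ← integral_const_mul]
    apply integral_mono_of_nonneg
    · filter_upwards with z
      exact mul_nonneg (Real.rpow_nonneg (hφnn z) _) (sq_nonneg _)
    · exact hint.const_mul _
    · filter_upwards with z
      exact hkey z₀ z
  refine ⟨main, fun hb z₀ hz₀ => ?_⟩
  refine le_trans (main z₀ hz₀) ?_
  have hnn : 0 ≤ ∫ z in C, (φ z) ^ q ∂μ := by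
    rw [hCres]
    exact integral_nonneg fun z => Real.rpow_nonneg (hφnn z) _
  calc φ z₀ * ∫ z in C, (φ z) ^ q ∂μ ≤ 1 * ∫ z in C, (φ z) ^ q ∂μ :=
        mul_le_mul_of_nonneg_right (hb z₀ hz₀) hnn
    _ = _ := one_mul _
end
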